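/- Let C > 0 and let x : [0, T) → ℝ be differentiable with x′(t) ≤ C|x(t)| + x(t) − x(t)² for all t ∈ [0, T), and suppose x(0) < −C. Then x(t) < −C for all t ∈ [0, T) and x′(t) < 0 for all t ∈ [0, T); i.e., x is strictly decreasing and never reaches an equilibrium. -/
import Mathlib


/-- **Monotone decay in GREAD-F.**
Let `C > 0` and `x : [0, T) → ℝ` be differentiable with
`x′(t) ≤ C |x t| + x t − (x t)²` on `[0, T)` and `x 0 < −C`.  Then
`x t < −C` and `x′(t) < 0` for all `t ∈ [0, T)`: `x` is strictly decreasing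
and never reaches an equilibrium. -/
theorem gread_f_strictly_decreasing
    (C T : ℝ) (hC : 0 < C) (x x' : ℝ → ℝ)
    (hderiv : ∀ t ∈ Set.Ico (0 : ℝ) T, HasDerivWithinAt x (x' t) (Set.Ico 0 T) t)
    (hineq : ∀ t ∈ Set.Ico (0 : ℝ) T, x' t ≤ C * |x t| + x t - (x t) ^ 2)
    (h0 : x 0 < -C) :
    ∀ t ∈ Set.Ico (0 : ℝ) T, x t < -C ∧ x' t < 0 := by
  have key : ∀ t ∈ Set.Ico (0 : ℝ) T, x t < -C → x' t < 0 := by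
    intro t ht hx
    have h1 := hineq t ht
    have hxneg : x t < 0 := lt_trans hx (by linarith)
    rw [abs_of_neg hxneg] at h1
    nlinarith [mul_pos (neg_pos.mpr hxneg) (by linarith : (0:ℝ) < -(C + x t))]
  suffices hlt : ∀ t ∈ Set.Ico (0 : ℝ) T, x t < -C by
    intro t ht; exact ⟨hlt t ht, key t ht (hlt t ht)⟩
  by_contra hcon
  push_neg at hcon
  set S : Set ℝ := {t | t ∈ Set.Ico (0 : ℝ) T ∧ -C ≤ x t} with hSdef
  have hSne : S.Nonempty := by
    obtain ⟨t, ht, hx⟩ := hcon; exact ⟨t, ht, hx⟩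
  have hSbdd : BddBelow S := ⟨0, fun t ht => ht.1.1⟩
  set t₀ := sInf S with ht₀def
  have ht₀lb : ∀ t ∈ S, t₀ ≤ t := fun t ht => csInf_le hSbdd ht
  have ht₀0 : 0 ≤ t₀ := le_csInf hSne fun t ht => ht.1.1
  have ht₀T : t₀ < T := by
    obtain ⟨t, ht⟩ := hSne; exact lt_of_le_of_lt (ht₀lb t ht) ht.1.2
  have ht₀mem : t₀ ∈ Set.Ico (0 : ℝ) T := ⟨ht₀0, ht₀T⟩
  have hcont : ContinuousWithinAt x (Set.Ico 0 T) t₀ :=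
    (hderiv t₀ ht₀mem).continuousWithinAt
  obtain ⟨u, hu_anti, hu_tendsto, hu_mem⟩ := exists_seq_tendsto_sInf hSne hSbdd
  have hxt₀ge : -C ≤ x t₀ := by
    have htend : Filter.Tendsto (fun n => x (u n)) Filter.atTop (nhds (x t₀)) := by
      apply hcont.tendsto.comp
      exact tendsto_nhdsWithin_iff.mpr
        ⟨hu_tendsto, Filter.Eventually.of_forall fun n => (hu_mem n).1⟩
    exact ge_of_tendsto htend (Filter.Eventually.of_forall fun n => (hu_mem n).2)
  have ht₀pos : 0 < t₀ := by
    rcases lt_or_eq_of_le ht₀0 with h | h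
    · exact h
    · exfalso; rw [← h] at hxt₀ge; linarith
  have hbefore : ∀ t ∈ Set.Ico (0 : ℝ) t₀, x t < -C := by
    intro t ht
    by_contra h
    exact absurd (ht₀lb t ⟨⟨ht.1, lt_trans ht.2 ht₀T⟩, not_lt.mp h⟩) (not_le.mpr ht.2)
  have hclos : t₀ ∈ closure (Set.Ico (0 : ℝ) t₀) := by
    rw [closure_Ico (ne_of_lt ht₀pos)]
    exact ⟨ht₀0, le_refl _⟩
  have hneBot : (nhdsWithin t₀ (Set.Ico (0 : ℝ) t₀)).NeBot :=
    mem_closure_iff_nhdsWithin_neBot.mp hclos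
  have hsub : Set.Ico (0 : ℝ) t₀ ⊆ Set.Ico 0 T :=
    Set.Ico_subset_Ico_right (le_of_lt ht₀T)
  have hxt₀le : x t₀ ≤ -C := by
    have htend : Filter.Tendsto x (nhdsWithin t₀ (Set.Ico 0 t₀)) (nhds (x t₀)) :=
      (hcont.mono hsub).tendsto
    refine le_of_tendsto htend ?_
    filter_upwards [self_mem_nhdsWithin] with t ht
    exact le_of_lt (hbefore t ht)
  have hxt₀ : x t₀ = -C := le_antisymm hxt₀le hxt₀ge
  -- derivative at t₀ is ≤ -C < 0
  have hd0 : x' t₀ < 0 := by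
    have h1 := hineq t₀ ht₀mem
    rw [hxt₀] at h1
    rw [abs_neg, abs_of_pos hC] at h1
    nlinarith
  -- but slopes from the left are nonnegative
  have hslope : Filter.Tendsto (slope x t₀) (nhdsWithin t₀ (Set.Ico 0 t₀)) (nhds (x' t₀)) := by
    have := hasDerivWithinAt_iff_tendsto_slope.mp (hderiv t₀ ht₀mem)
    refine this.mono_left (nhdsWithin_mono _ ?_)
    intro t ht
    exact ⟨hsub ht, fun h => absurd (h ▸ ht.2) (lt_irrefl t₀)⟩
  have hge : 0 ≤ x' t₀ := by
    refine ge_of_tendsto hslope ?_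
    filter_upwards [self_mem_nhdsWithin] with t ht
    have hx : x t < -C := hbefore t ht
    have h1 : x t - x t₀ ≤ 0 := by rw [hxt₀]; linarith
    have h2 : t - t₀ ≤ 0 := by linarith [ht.2]
    rw [slope_def_field, div_nonneg_iff]
    exact Or.inr ⟨h1, h2⟩
  linarith
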